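/- Volume-rescaled sampling VS^k is a probability measure: for any distribution D_X on R^d with invertible second moment Sigma = E[x x^T], the measure A |-> E_{D_X^k}[1_A * det(sum_{i=1}^k x_i x_i^T)] / (d! binom(k,d) det(Sigma)) on (R^d)^k assigns total mass 1. -/

import Mathlib

open MeasureTheory Matrix

lemma auxVS_integrable_pi_prod {ι E : Type*} [Fintype ι] [MeasurableSpace E]
    (μ : Measure E) [SigmaFinite μ] (f : ι → E → ℝ) (hf : ∀ i, Integrable (f i) μ) :
    Integrable (fun x : ι → E => ∏ i, f i (x i)) (Measure.pi fun _ => μ) := by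
  letI : MeasureSpace E := ⟨μ⟩
  exact Integrable.fintype_prod hf

lemma auxVS_integral_pi_prod {ι E : Type*} [Fintype ι] [MeasurableSpace E]
    (μ : Measure E) [SigmaFinite μ] (f : ι → E → ℝ) :
    ∫ x : ι → E, ∏ i, f i (x i) ∂(Measure.pi fun _ => μ) = ∏ i, ∫ x, f i x ∂μ := by
  letI : MeasureSpace E := ⟨μ⟩
  exact integral_fintype_prod_eq_prod f

lemma auxVS_psd (d k : ℕ) (w : Fin k → Fin d → ℝ) :
    (∑ i, vecMulVec (w i) (w i)).PosSemidef := by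
  refine Finset.sum_induction (fun i => vecMulVec (w i) (w i)) Matrix.PosSemidef
    (fun a b ha hb => ha.add hb) Matrix.PosSemidef.zero ?_
  intro i _
  rw [Matrix.posSemidef_iff_dotProduct_mulVec]
  constructor
  · ext a b
    simp [Matrix.conjTranspose_apply, vecMulVec_apply, mul_comm]
  · intro x
    have h : star x ⬝ᵥ (vecMulVec (w i) (w i)).mulVec x
        = (∑ j, w i j * x j) * (∑ j, w i j * x j) := by
      simp only [dotProduct, Matrix.mulVec, vecMulVec_apply, Pi.star_apply, star_trivial]
      rw [Finset.sum_mul]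
      refine Finset.sum_congr rfl fun a _ => ?_
      rw [Finset.mul_sum, Finset.mul_sum]
      refine Finset.sum_congr rfl fun b _ => ?_
      ring
    rw [h]
    exact mul_self_nonneg _

lemma auxVS_det_nonneg {n : ℕ} {M : Matrix (Fin n) (Fin n) ℝ} (hM : M.PosSemidef) :
    0 ≤ M.det := by
  rw [hM.isHermitian.det_eq_prod_eigenvalues]
  apply Finset.prod_nonneg
  intro i _
  simpa using hM.eigenvalues_nonneg i

lemma auxVS_core (d k : ℕ) (μ : Measure (Fin d → ℝ)) [IsProbabilityMeasure μ]
    (hint : ∀ i j : Fin d, Integrable (fun x => x i * x j) μ)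
    (Sg : Matrix (Fin d) (Fin d) ℝ)
    (hSg : Sg = Matrix.of fun i j => ∫ x, x i * x j ∂μ) :
    Integrable (fun w : Fin k → Fin d → ℝ => (∑ i, vecMulVec (w i) (w i)).det)
      (Measure.pi fun _ => μ) ∧
    ∫ w : Fin k → Fin d → ℝ, (∑ i, vecMulVec (w i) (w i)).det ∂(Measure.pi fun _ => μ)
      = (k.descFactorial d : ℝ) * Sg.det := by
  classical
  set π := (Measure.pi fun _ : Fin k => μ) with hπ
  -- pointwise expansion over all index maps
  have hA : ∀ w : Fin k → Fin d → ℝ,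
      (∑ i, vecMulVec (w i) (w i)).det
        = ∑ r : Fin d → Fin k, ∑ σ : Equiv.Perm (Fin d),
            ((Equiv.Perm.sign σ : ℤ) : ℝ) * ∏ i, (w (r i) (σ i) * w (r i) i) := by
    intro w
    rw [Matrix.det_apply']
    have hentry : ∀ a b : Fin d, (∑ j, vecMulVec (w j) (w j)) a b = ∑ j, w j a * w j b := by
      intro a b
      simp [Matrix.sum_apply, vecMulVec_apply]
    have h1 : ∀ σ : Equiv.Perm (Fin d),
        (∏ i, (∑ j, vecMulVec (w j) (w j)) (σ i) i)
          = ∑ r : Fin d → Fin k, ∏ i, (w (r i) (σ i) * w (r i) i) := by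
      intro σ
      simp_rw [hentry]
      rw [Finset.prod_univ_sum]
      simp [Fintype.piFinset_univ]
    simp_rw [h1, Finset.mul_sum]
    exact Finset.sum_comm
  -- non-injective terms vanish pointwise
  have hB : ∀ r : Fin d → Fin k, ¬ Function.Injective r → ∀ w : Fin k → Fin d → ℝ,
      (∑ σ : Equiv.Perm (Fin d),
        ((Equiv.Perm.sign σ : ℤ) : ℝ) * ∏ i, (w (r i) (σ i) * w (r i) i)) = 0 := by
    intro r hr w
    have h1 : ∀ σ : Equiv.Perm (Fin d),
        ((Equiv.Perm.sign σ : ℤ) : ℝ) * ∏ i, (w (r i) (σ i) * w (r i) i)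
          = (((Equiv.Perm.sign σ : ℤ) : ℝ) * ∏ i, w (r i) (σ i)) * ∏ i, w (r i) i := by
      intro σ
      rw [Finset.prod_mul_distrib]
      ring
    simp_rw [h1, ← Finset.sum_mul]
    have h2 : (Matrix.of fun a b => w (r b) a).det
        = ∑ σ : Equiv.Perm (Fin d), ((Equiv.Perm.sign σ : ℤ) : ℝ) * ∏ i, w (r i) (σ i) := by
      rw [Matrix.det_apply']
      rfl
    rw [← h2]
    obtain ⟨a, b, hab, hne⟩ := Function.not_injective_iff.mp hr
    rw [Matrix.det_zero_of_column_eq hne (fun m => by simp [hab]), zero_mul]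
  -- injective terms: integrability and integral value
  have hC : ∀ r : Fin d → Fin k, Function.Injective r → ∀ σ : Equiv.Perm (Fin d),
      Integrable (fun w : Fin k → Fin d → ℝ => ∏ i, (w (r i) (σ i) * w (r i) i)) π ∧
      ∫ w : Fin k → Fin d → ℝ, (∏ i, (w (r i) (σ i) * w (r i) i)) ∂π
        = ∏ i, Sg (σ i) i := by
    intro r hr σ
    set G : Fin k → (Fin d → ℝ) → ℝ :=
      fun j x => ∏ i ∈ Finset.univ.filter (fun i => r i = j), (x (σ i) * x i) with hG
    have hprod : ∀ w : Fin k → Fin d → ℝ,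
        (∏ j, G j (w j)) = ∏ i, (w (r i) (σ i) * w (r i) i) := by
      intro w
      have h1 : ∀ j, G j (w j)
          = ∏ i ∈ Finset.univ.filter (fun i => r i = j), (w (r i) (σ i) * w (r i) i) := by
        intro j
        refine Finset.prod_congr rfl fun i hi => ?_
        rw [(Finset.mem_filter.mp hi).2]
      simp_rw [h1]
      exact Finset.prod_fiberwise _ _ _
    have hGint : ∀ j, Integrable (G j) μ ∧
        ∫ x, G j x ∂μ = ∏ i ∈ Finset.univ.filter (fun i => r i = j), Sg (σ i) i := by
      intro j
      by_cases h : ∃ i0, r i0 = j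
      · obtain ⟨i0, hi0⟩ := h
        have hfib : Finset.univ.filter (fun i => r i = j) = {i0} := by
          ext i
          simp only [Finset.mem_filter, Finset.mem_univ, true_and, Finset.mem_singleton]
          exact ⟨fun hi => hr (hi.trans hi0.symm), fun hi => hi ▸ hi0⟩
        constructor
        · simpa [hG, hfib] using hint (σ i0) i0
        · simp only [hG, hfib, Finset.prod_singleton]
          rw [hSg]
          rfl
      · have hfib : Finset.univ.filter (fun i => r i = j) = ∅ := by
          ext i
          simp only [Finset.mem_filter, Finset.mem_univ, true_and, Finset.notMem_empty,
            iff_false]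
          exact fun hi => h ⟨i, hi⟩
        constructor
        · simpa [hG, hfib] using integrable_const (c := (1 : ℝ)) (μ := μ)
        · simp [hG, hfib]
    constructor
    · exact (auxVS_integrable_pi_prod μ G (fun j => (hGint j).1)).congr
        (Filter.Eventually.of_forall hprod)
    · rw [show (fun w : Fin k → Fin d → ℝ => ∏ i, (w (r i) (σ i) * w (r i) i))
          = fun w => ∏ j, G j (w j) from funext fun w => (hprod w).symm]
      rw [auxVS_integral_pi_prod μ G]
      rw [Finset.prod_congr rfl fun j _ => (hGint j).2]
      exact Finset.prod_fiberwise _ _ _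
  -- restrict the sum to injective maps
  have hA' : ∀ w : Fin k → Fin d → ℝ,
      (∑ i, vecMulVec (w i) (w i)).det
        = ∑ r ∈ Finset.univ.filter (fun r : Fin d → Fin k => Function.Injective r),
            ∑ σ : Equiv.Perm (Fin d),
              ((Equiv.Perm.sign σ : ℤ) : ℝ) * ∏ i, (w (r i) (σ i) * w (r i) i) := by
    intro w
    rw [hA w]
    symm
    apply Finset.sum_subset (Finset.filter_subset _ _)
    intro r _ hrn
    have hnr : ¬ Function.Injective r := by
      simpa using hrn
    exact hB r hnr w
  have hTint : ∀ r ∈ Finset.univ.filter (fun r : Fin d → Fin k => Function.Injective r),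
      Integrable (fun w : Fin k → Fin d → ℝ => ∑ σ : Equiv.Perm (Fin d),
        ((Equiv.Perm.sign σ : ℤ) : ℝ) * ∏ i, (w (r i) (σ i) * w (r i) i)) π := by
    intro r hrmem
    have hr : Function.Injective r := (Finset.mem_filter.mp hrmem).2
    apply integrable_finset_sum
    intro σ _
    exact ((hC r hr σ).1).const_mul _
  have hfun : (fun w : Fin k → Fin d → ℝ => (∑ i, vecMulVec (w i) (w i)).det)
      = fun w => ∑ r ∈ Finset.univ.filter (fun r : Fin d → Fin k => Function.Injective r),
          ∑ σ : Equiv.Perm (Fin d),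
            ((Equiv.Perm.sign σ : ℤ) : ℝ) * ∏ i, (w (r i) (σ i) * w (r i) i) :=
    funext hA'
  have hdint : Integrable (fun w : Fin k → Fin d → ℝ => (∑ i, vecMulVec (w i) (w i)).det) π := by
    rw [hfun]
    exact integrable_finset_sum _ hTint
  refine ⟨hdint, ?_⟩
  rw [hfun, integral_finset_sum _ hTint]
  have hterm : ∀ r ∈ Finset.univ.filter (fun r : Fin d → Fin k => Function.Injective r),
      (∫ w : Fin k → Fin d → ℝ, (∑ σ : Equiv.Perm (Fin d),
        ((Equiv.Perm.sign σ : ℤ) : ℝ) * ∏ i, (w (r i) (σ i) * w (r i) i)) ∂π) = Sg.det := by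
    intro r hrmem
    have hr : Function.Injective r := (Finset.mem_filter.mp hrmem).2
    rw [integral_finset_sum _ (fun σ _ => ((hC r hr σ).1).const_mul _)]
    have h3 : ∀ σ : Equiv.Perm (Fin d),
        ∫ w : Fin k → Fin d → ℝ,
          ((Equiv.Perm.sign σ : ℤ) : ℝ) * ∏ i, (w (r i) (σ i) * w (r i) i) ∂π
          = ((Equiv.Perm.sign σ : ℤ) : ℝ) * ∏ i, Sg (σ i) i := by
      intro σ
      rw [integral_const_mul, (hC r hr σ).2]
    rw [Finset.sum_congr rfl fun σ _ => h3 σ]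
    exact (Matrix.det_apply' Sg).symm
  rw [Finset.sum_congr rfl hterm, Finset.sum_const, nsmul_eq_mul]
  congr 1
  have hcard : (Finset.univ.filter (fun r : Fin d → Fin k => Function.Injective r)).card
      = Fintype.card (Fin d ↪ Fin k) := by
    rw [← Fintype.card_subtype]
    exact Fintype.card_congr (Equiv.subtypeInjectiveEquivEmbedding _ _)
  rw [hcard, Fintype.card_embedding_eq]
  simp

/-- Volume-rescaled sampling `VS^k` is a probability measure. -/
theorem stmt6 (d k : ℕ) (hd : 0 < d) (hdk : d ≤ k)
    (μ : Measure (Fin d → ℝ)) [IsProbabilityMeasure μ]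
    (hint : ∀ i j : Fin d, Integrable (fun x => x i * x j) μ)
    (Sg : Matrix (Fin d) (Fin d) ℝ)
    (hSg : Sg = Matrix.of fun i j => ∫ x, x i * x j ∂μ)
    (hinv : IsUnit Sg.det) :
    IsProbabilityMeasure
      ((Measure.pi fun _ : Fin k => μ).withDensity fun w =>
        ENNReal.ofReal ((∑ i, vecMulVec (w i) (w i)).det /
          ((Nat.factorial d : ℝ) * (Nat.choose k d : ℝ) * Sg.det))) := by
  classical
  obtain ⟨hdint, hI⟩ := auxVS_core d k μ hint Sg hSg
  set π := (Measure.pi fun _ : Fin k => μ) with hπ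
  have hdet0 : ∀ w : Fin k → Fin d → ℝ, 0 ≤ (∑ i, vecMulVec (w i) (w i)).det :=
    fun w => auxVS_det_nonneg (auxVS_psd d k w)
  have hSgne : Sg.det ≠ 0 := by
    intro h
    rw [h] at hinv
    simpa using hinv
  have hDpos : (0 : ℝ) < (k.descFactorial d : ℝ) := by
    have : 0 < k.descFactorial d := by
      rw [Nat.descFactorial_eq_factorial_mul_choose]
      exact Nat.mul_pos (Nat.factorial_pos d) (Nat.choose_pos hdk)
    exact_mod_cast this
  have hSgnonneg : 0 ≤ Sg.det := by
    have h1 : 0 ≤ ∫ w : Fin k → Fin d → ℝ, (∑ i, vecMulVec (w i) (w i)).det ∂π :=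
      integral_nonneg hdet0
    rw [hI] at h1
    nlinarith
  have hSgpos : 0 < Sg.det := lt_of_le_of_ne hSgnonneg (Ne.symm hSgne)
  have hcpos : 0 < (Nat.factorial d : ℝ) * (Nat.choose k d : ℝ) * Sg.det := by
    apply mul_pos _ hSgpos
    apply mul_pos
    · exact_mod_cast Nat.factorial_pos d
    · exact_mod_cast Nat.choose_pos hdk
  constructor
  rw [withDensity_apply _ MeasurableSet.univ, setLIntegral_univ]
  rw [← ofReal_integral_eq_lintegral_ofReal (hdint.div_const _)
    (Filter.Eventually.of_forall fun w => div_nonneg (hdet0 w) hcpos.le)]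
  rw [integral_div, hI]
  have hcast : (k.descFactorial d : ℝ) = (Nat.factorial d : ℝ) * (Nat.choose k d : ℝ) := by
    rw [Nat.descFactorial_eq_factorial_mul_choose]
    push_cast
    ring
  rw [hcast, div_self (by rw [← hcast] at hcpos ⊢; nlinarith)]
  exact ENNReal.ofReal_one
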